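/- Let p be a prime with p ≡ 3 (mod 8). Then there are no integers l, m with l and m both odd, gcd(l,m) = 1, and integers u, v such that l² + m² = 2u² and l² − 3m² = 2pv². -/

import Mathlib

theorem stmt_4 (p : ℕ) (hp : Nat.Prime p) (h8 : p % 8 = 3) :
    ¬ ∃ l m u v : ℤ, Odd l ∧ Odd m ∧ IsCoprime l m ∧
      l ^ 2 + m ^ 2 = 2 * u ^ 2 ∧ l ^ 2 - 3 * m ^ 2 = 2 * (p : ℤ) * v ^ 2 := by
  rintro ⟨l, m, u, v, hl, hm, hco, h1, h2⟩
  haveI : Fact p.Prime := ⟨hp⟩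
  have hpZ : Prime (p : ℤ) := Nat.prime_iff_prime_int.mp hp
  have hp2 : p ≠ 2 := by omega
  have key : u ^ 2 = 2 * m ^ 2 + (p : ℤ) * v ^ 2 := by linarith
  by_cases hpm : (p : ℤ) ∣ m
  · have hpl : (p : ℤ) ∣ l := by
      apply hpZ.dvd_of_dvd_pow (n := 2)
      obtain ⟨k, hk⟩ := hpm
      have hl2 : l ^ 2 = 3 * m ^ 2 + 2 * (p : ℤ) * v ^ 2 := by linarith
      rw [hl2, hk]
      exact ⟨3 * (p * k ^ 2) + 2 * v ^ 2, by ring⟩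
    have := hco.isUnit_of_dvd' hpl hpm
    rw [Int.isUnit_iff] at this
    have := hp.two_le
    omega
  · have hm0 : (m : ZMod p) ≠ 0 := by
      intro h
      exact hpm ((ZMod.intCast_zmod_eq_zero_iff_dvd m p).mp h)
    have hcast : (u : ZMod p) ^ 2 = 2 * (m : ZMod p) ^ 2 := by
      have := congrArg (fun z : ℤ => (z : ZMod p)) key
      push_cast at this
      simpa [ZMod.natCast_self] using this
    have hsq : IsSquare (2 : ZMod p) := by
      refine ⟨(u : ZMod p) * (m : ZMod p)⁻¹, ?_⟩
      field_simp
      rw [hcast]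
    rw [ZMod.exists_sq_eq_two_iff hp2] at hsq
    omega
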